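/- arXiv:2502.20148 — 2 statements merged into one kernel-verified Lean document; each statement's English description precedes it below -/
import Mathlib

section
/- Let s ≥ 1 be a real number, let r be a natural number with r ≤ s, and let d_1,…,d_r and m_1,…,m_r be real numbers satisfying 1 ≤ d_i ≤ s and m_i ≥ 0 for every i, and ∑_{i=1}^{r} m_i = s. Then ∑_{i=1}^{r} √(d_i · m_i) · log(d_i) ≤ s^{3/2} · log(s). -/
/-- Total-work bound for quantum partial BFS:
if `r ≤ s`, `1 ≤ dᵢ ≤ s`, `mᵢ ≥ 0` and `∑ mᵢ = s`, then
`∑ √(dᵢ·mᵢ)·log dᵢ ≤ s^{3/2}·log s`. -/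
theorem stmt_1 (s : ℝ) (hs : 1 ≤ s) (r : ℕ) (hr : (r : ℝ) ≤ s)
    (d m : Fin r → ℝ) (hd1 : ∀ i, 1 ≤ d i) (hds : ∀ i, d i ≤ s)
    (hm : ∀ i, 0 ≤ m i) (hsum : ∑ i, m i = s) :
    ∑ i, Real.sqrt (d i * m i) * Real.log (d i) ≤ s * Real.sqrt s * Real.log s := by
  have hs0 : (0:ℝ) ≤ s := by linarith
  have hlogs : 0 ≤ Real.log s := Real.log_nonneg hs
  have step1 : ∑ i, Real.sqrt (d i * m i) * Real.log (d i)
      ≤ ∑ i, Real.sqrt s * Real.sqrt (m i) * Real.log s := by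
    apply Finset.sum_le_sum
    intro i _
    have h1 : Real.sqrt (d i * m i) ≤ Real.sqrt s * Real.sqrt (m i) := by
      rw [← Real.sqrt_mul hs0]
      exact Real.sqrt_le_sqrt (mul_le_mul_of_nonneg_right (hds i) (hm i))
    have h2 : Real.log (d i) ≤ Real.log s :=
      Real.log_le_log (by linarith [hd1 i]) (hds i)
    have h3 : 0 ≤ Real.log (d i) := Real.log_nonneg (hd1 i)
    have h4 : 0 ≤ Real.sqrt (d i * m i) := Real.sqrt_nonneg _
    have h5 : 0 ≤ Real.sqrt s * Real.sqrt (m i) := by positivity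
    exact mul_le_mul h1 h2 h3 h5
  have cs : (∑ i, Real.sqrt (m i)) ^ 2 ≤ (r : ℝ) * ∑ i, (Real.sqrt (m i))^2 :=
    by simpa using sq_sum_le_card_mul_sum_sq (ι := Fin r) (α := ℝ) (s := (Finset.univ : Finset (Fin r))) (f := fun i => Real.sqrt (m i))
  have hsq : ∑ i, (Real.sqrt (m i))^2 = s := by
    rw [← hsum]
    exact Finset.sum_congr rfl fun i _ => Real.sq_sqrt (hm i)
  have hsum_sqrt : ∑ i, Real.sqrt (m i) ≤ s := by
    have h1 : (∑ i, Real.sqrt (m i)) ^ 2 ≤ s ^ 2 := by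
      calc (∑ i, Real.sqrt (m i)) ^ 2 ≤ (r : ℝ) * s := by rw [hsq] at cs; exact cs
        _ ≤ s * s := mul_le_mul_of_nonneg_right hr hs0
        _ = s ^ 2 := (sq s).symm
    have h2 : 0 ≤ ∑ i, Real.sqrt (m i) :=
      Finset.sum_nonneg fun i _ => Real.sqrt_nonneg _
    nlinarith
  calc ∑ i, Real.sqrt (d i * m i) * Real.log (d i)
      ≤ ∑ i, Real.sqrt s * Real.sqrt (m i) * Real.log s := step1
    _ = Real.sqrt s * Real.log s * ∑ i, Real.sqrt (m i) := by
        rw [Finset.mul_sum]; exact Finset.sum_congr rfl fun i _ => by ring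
    _ ≤ Real.sqrt s * Real.log s * s := by
        apply mul_le_mul_of_nonneg_left hsum_sqrt (by positivity)
    _ = s * Real.sqrt s * Real.log s := by ring
end

section
/- Let V be a finite set with |V| = n, where n ≥ 2, let 1 ≤ s ≤ n be a natural number, and for each v ∈ V let N(v) ⊆ V be a subset with |N(v)| ≥ s. Let k be a natural number with k ≥ 2 · n · ln(n) / s (as real numbers). Then the number of functions f : {1,…,k} → V such that for every v ∈ V there exists some i ∈ {1,…,k} with f(i) ∈ N(v) is at least n^k − n^{k−1}. -/
/-- Hitting-set sampling lemma: if `k ≥ 2·n·ln n / s`, at least `n^k − n^{k−1}`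
of the `n^k` samples `f : Fin k → V` (with replacement) hit `N(v)` for every `v`. -/
theorem stmt_8 {V : Type*} [Fintype V] (n s : ℕ) (hn : Fintype.card V = n)
    (hn2 : 2 ≤ n) (hs : 1 ≤ s) (hsn : s ≤ n)
    (N : V → Finset V) (hN : ∀ v, s ≤ (N v).card)
    (k : ℕ) (hk : 2 * (n : ℝ) * Real.log n / s ≤ (k : ℝ)) :
    n ^ k - n ^ (k - 1) ≤ Nat.card {f : Fin k → V // ∀ v, ∃ i, f i ∈ N v} := by
  classical
  have hn0 : (0:ℝ) < n := by positivity
  have hs0 : (0:ℝ) < s := by exact_mod_cast hs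
  -- k ≥ 2
  have hk2 : 2 ≤ k := by
    by_contra h
    push_neg at h
    interval_cases k
    · have : 0 < 2 * (n:ℝ) * Real.log n / s := by
        apply div_pos _ hs0
        have : (0:ℝ) < Real.log n := Real.log_pos (by exact_mod_cast hn2)
        positivity
      simp at hk; linarith
    · -- k = 1 : need 2 n log n / s > 1
      have hlog : Real.log 2 ≤ Real.log n := by
        apply Real.log_le_log (by norm_num)
        exact_mod_cast hn2
      have hsn' : (s:ℝ) ≤ n := by exact_mod_cast hsn
      have h2 : (1:ℝ) < 2 * (n:ℝ) * Real.log n / s := by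
        rw [lt_div_iff₀ hs0]
        have hl2 : (0.6931:ℝ) < Real.log 2 := by
          rw [show (0.6931:ℝ) = 0.6931 by norm_num]
          have := Real.log_two_gt_d9
          linarith
        have : 2 * (s:ℝ) * Real.log 2 ≤ 2 * n * Real.log n := by
          apply mul_le_mul _ hlog (by linarith) (by positivity)
          linarith
        nlinarith
      simp at hk; linarith
  -- key real inequality: n * (n - s)^k ≤ n^(k-1)
  have hks : 2 * Real.log n ≤ (s:ℝ) * k / n := by
    rw [le_div_iff₀ hn0]
    have := (div_le_iff₀ hs0).mp hk
    nlinarith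
  have h1 : ((n:ℝ) - s) ≤ n * Real.exp (-(s/n)) := by
    have := Real.add_one_le_exp (-(s/n : ℝ))
    have h := mul_le_mul_of_nonneg_left this (le_of_lt hn0)
    calc ((n:ℝ) - s) = n * (-(s/n) + 1) := by field_simp; ring
      _ ≤ n * Real.exp (-(s/n)) := h
  have hns : (0:ℝ) ≤ (n:ℝ) - s := by
    have : (s:ℝ) ≤ n := by exact_mod_cast hsn
    linarith
  have h2 : ((n:ℝ) - s)^k ≤ (n:ℝ)^k * Real.exp (-(s*k/n)) := by
    calc ((n:ℝ) - s)^k ≤ (n * Real.exp (-(s/n)))^k := pow_le_pow_left₀ hns h1 k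
      _ = (n:ℝ)^k * Real.exp (-(s*k/n)) := by
          rw [mul_pow, ← Real.exp_nat_mul]
          ring_nf
  have h3 : Real.exp (-((s:ℝ)*k/n)) ≤ ((n:ℝ)^2)⁻¹ := by
    have : Real.exp (-((s:ℝ)*k/n)) ≤ Real.exp (-(2 * Real.log n)) :=
      Real.exp_le_exp.mpr (by linarith)
    calc Real.exp (-((s:ℝ)*k/n)) ≤ Real.exp (-(2 * Real.log n)) := this
      _ = ((n:ℝ)^2)⁻¹ := by
          rw [Real.exp_neg]
          congr 1
          rw [show 2 * Real.log n = Real.log (n^2) by rw [Real.log_pow]; push_cast; ring]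
          exact Real.exp_log (by positivity)
  have hkey : (n:ℕ) * ((n:ℕ) - s)^k ≤ (n:ℕ)^(k-1) := by
    have hc : ((n - s : ℕ) : ℝ) = (n:ℝ) - s := by
      push_cast [hsn]; ring
    have hr : (n:ℝ) * ((n:ℝ) - s)^k ≤ (n:ℝ)^(k-1) := by
      have : (n:ℝ) * ((n:ℝ) - s)^k ≤ (n:ℝ) * ((n:ℝ)^k * ((n:ℝ)^2)⁻¹) := by
        apply mul_le_mul_of_nonneg_left _ (le_of_lt hn0)
        calc ((n:ℝ) - s)^k ≤ (n:ℝ)^k * Real.exp (-(s*k/n)) := h2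
          _ ≤ (n:ℝ)^k * ((n:ℝ)^2)⁻¹ :=
              mul_le_mul_of_nonneg_left h3 (by positivity)
      have he : (n:ℝ) * ((n:ℝ)^k * ((n:ℝ)^2)⁻¹) = (n:ℝ)^(k-1) := by
        have : k = (k - 1) + 1 := (Nat.succ_pred_eq_of_pos (by omega)).symm
        rw [this]
        have : k - 1 = (k - 2) + 1 := by omega
        rw [this]
        field_simp
        rw [show k - 2 + 1 + 1 - 1 = (k - 2) + 1 by omega]
        ring
      linarith [he ▸ this]
    exact_mod_cast hc ▸ hr
  -- counting
  have hcard : Nat.card {f : Fin k → V // ∀ v, ∃ i, f i ∈ N v}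
      = (Finset.univ.filter (fun f : Fin k → V => ∀ v, ∃ i, f i ∈ N v)).card := by
    rw [Nat.card_eq_fintype_card, Fintype.card_subtype]
  rw [hcard]
  set P : (Fin k → V) → Prop := fun f => ∀ v, ∃ i, f i ∈ N v with hP
  have htot : (Finset.univ.filter P).card + (Finset.univ.filter (fun f => ¬ P f)).card
      = n ^ k := by
    rw [Finset.card_filter_add_card_filter_not]
    simp [Fintype.card_fun, hn]
  have hbad : (Finset.univ.filter (fun f : Fin k → V => ¬ P f)).card ≤ n ^ (k - 1) := by
    have hsub : (Finset.univ.filter (fun f : Fin k → V => ¬ P f))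
        ⊆ Finset.univ.biUnion (fun v : V =>
            Fintype.piFinset (fun _ : Fin k => (N v)ᶜ)) := by
      intro f hf
      simp only [Finset.mem_filter, hP, not_forall] at hf
      obtain ⟨v, hv⟩ := hf.2
      push_neg at hv
      simp only [Finset.mem_biUnion, Fintype.mem_piFinset, Finset.mem_compl]
      exact ⟨v, Finset.mem_univ v, hv⟩
    calc (Finset.univ.filter (fun f : Fin k → V => ¬ P f)).card
        ≤ (Finset.univ.biUnion (fun v : V =>
            Fintype.piFinset (fun _ : Fin k => (N v)ᶜ))).card := Finset.card_le_card hsub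
      _ ≤ ∑ v : V, (Fintype.piFinset (fun _ : Fin k => (N v)ᶜ)).card :=
          Finset.card_biUnion_le
      _ ≤ ∑ _v : V, (n - s)^k := by
          apply Finset.sum_le_sum
          intro v _
          rw [Fintype.card_piFinset]
          simp only [Finset.card_compl, hn]
          rw [Finset.prod_const, Finset.card_univ, Fintype.card_fin]
          exact Nat.pow_le_pow_left (Nat.sub_le_sub_left (hN v) n) k
      _ = n * (n - s)^k := by
          rw [Finset.sum_const, Finset.card_univ, hn, smul_eq_mul]
      _ ≤ n ^ (k - 1) := hkey
  have h5 : n ^ k - (Finset.univ.filter (fun f : Fin k → V => ¬ P f)).card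
      = (Finset.univ.filter P).card := by
    rw [← htot]; simp
  rw [← h5]
  exact Nat.sub_le_sub_left hbad _
end
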